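/- There exists a constant C > 0 such that for every integer b ≥ 2, ∫_{1/b}^1 (1 − (1−x)^b − bx(1−x)^{b−1}) x^{−2} dx ≥ C(b−1). -/

import Mathlib

lemma integral_eval (b : ℕ) (hb : 2 ≤ b) :
    ∫ x in (1 / (b : ℝ))..1,
        (1 - (1 - x) ^ b - (b : ℝ) * x * (1 - x) ^ (b - 1)) / x ^ 2
      = (b : ℝ) * (1 - (1 - 1 / (b : ℝ)) ^ b) - 1 := by
  have hb0 : (0 : ℝ) < b := by positivity
  have hb0' : (0 : ℝ) < 1 / b := by positivity
  have hb1 : (1 : ℝ) / b ≤ 1 := by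
    rw [div_le_one hb0]; exact_mod_cast le_trans (by norm_num) hb
  have huicc : Set.uIcc (1 / (b : ℝ)) 1 = Set.Icc (1 / (b : ℝ)) 1 :=
    Set.uIcc_of_le hb1
  have hderiv : ∀ x ∈ Set.uIcc (1 / (b : ℝ)) 1,
      HasDerivAt (fun x : ℝ => -(1 - (1 - x) ^ b) / x)
        ((1 - (1 - x) ^ b - (b : ℝ) * x * (1 - x) ^ (b - 1)) / x ^ 2) x := by
    intro x hx
    rw [huicc] at hx
    have hxpos : 0 < x := lt_of_lt_of_le hb0' hx.1
    have hxne : x ≠ 0 := ne_of_gt hxpos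
    have h1 : HasDerivAt (fun x : ℝ => 1 - x) (-1) x := (hasDerivAt_id x).const_sub 1
    have h2 : HasDerivAt (fun x : ℝ => (1 - x) ^ b)
        ((b : ℝ) * (1 - x) ^ (b - 1) * (-1)) x := h1.pow b
    have h3 : HasDerivAt (fun x : ℝ => -(1 - (1 - x) ^ b))
        (-(-((b : ℝ) * (1 - x) ^ (b - 1) * (-1)))) x := (h2.const_sub 1).neg
    have h4 : HasDerivAt (fun y : ℝ => -(1 - (1 - y) ^ b) / y)
        ((-(-((b : ℝ) * (1 - x) ^ (b - 1) * (-1))) * x - -(1 - (1 - x) ^ b) * 1) / x ^ 2) x :=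
      h3.div (hasDerivAt_id' x) hxne
    convert h4 using 1
    field_simp
    ring
  have hcont : IntervalIntegrable
      (fun x : ℝ => (1 - (1 - x) ^ b - (b : ℝ) * x * (1 - x) ^ (b - 1)) / x ^ 2)
      MeasureTheory.volume (1 / (b : ℝ)) 1 := by
    apply ContinuousOn.intervalIntegrable
    apply ContinuousOn.div
    · fun_prop
    · fun_prop
    · intro x hx
      rw [huicc] at hx
      have hxpos : 0 < x := lt_of_lt_of_le hb0' hx.1
      positivity
  rw [intervalIntegral.integral_eq_sub_of_hasDerivAt hderiv hcont]
  have hbne : (b : ℝ) ≠ 0 := ne_of_gt hb0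
  have h0 : (1 - (1 : ℝ)) ^ b = 0 := by
    simp [zero_pow (by omega : b ≠ 0)]
  rw [h0]
  field_simp
  ring

theorem stmt_7 :
    ∃ C : ℝ, 0 < C ∧ ∀ b : ℕ, 2 ≤ b →
      C * ((b : ℝ) - 1) ≤
        ∫ x in (1 / (b : ℝ))..1,
          (1 - (1 - x) ^ b - (b : ℝ) * x * (1 - x) ^ (b - 1)) / x ^ 2 := by
  refine ⟨1 - 2 * Real.exp (-1), ?_, ?_⟩
  · have h : (1 : ℝ) + 1 < Real.exp 1 := by
      have := Real.add_one_lt_exp (x := 1) one_ne_zero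
      linarith
    have h2 : Real.exp (-1) < 1 / 2 := by
      rw [Real.exp_neg, inv_lt_comm₀ (Real.exp_pos 1) (by norm_num)]
      norm_num
      linarith
    linarith
  · intro b hb
    rw [integral_eval b hb]
    have hb0 : (0 : ℝ) < b := by positivity
    have hb2 : (2 : ℝ) ≤ b := by exact_mod_cast hb
    have hbne : (b : ℝ) ≠ 0 := ne_of_gt hb0
    have hkey : (1 - 1 / (b : ℝ)) ^ b ≤ Real.exp (-1) := by
      have h1 : (1 : ℝ) - 1 / b ≤ Real.exp (-(1 / b)) := by
        have := Real.add_one_le_exp (-(1 / (b : ℝ)))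
        linarith
      have h1' : (0 : ℝ) ≤ 1 - 1 / b := by
        rw [sub_nonneg, div_le_one hb0]; linarith
      calc (1 - 1 / (b : ℝ)) ^ b ≤ Real.exp (-(1 / b)) ^ b :=
            pow_le_pow_left₀ h1' h1 b
        _ = Real.exp ((b : ℝ) * -(1 / b)) := (Real.exp_nat_mul _ b).symm
        _ = Real.exp (-1) := by rw [mul_neg, mul_one_div, div_self hbne]
    have hexp : 0 < Real.exp (-1) := Real.exp_pos _
    nlinarith [mul_le_mul_of_nonneg_left hkey (le_of_lt hb0)]
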